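/- Let 0 < λ ≤ log 2 and define q_0 = 1 and q_n = (e^{−λ(n+1)}/n) Σ_{k=1}^n q_{k−1} q_{n−k} for n ≥ 1. Then for all n ≥ 0, q_n ≤ e^{−2λn} / (n!)^{λ/log 2}. -/

import Mathlib

open Real Finset

lemma sum_inv_fact_aux (n : ℕ) (h : 1 ≤ n) :
    ∑ k ∈ Finset.Icc 1 n, (((k-1).factorial * (n-k).factorial : ℕ) : ℝ)⁻¹
      = 2 ^ (n-1) / ((n-1).factorial : ℝ) := by
  obtain ⟨m, rfl⟩ : ∃ m, n = m + 1 := ⟨n - 1, by omega⟩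
  have h1 : ∑ k ∈ Finset.Icc 1 (m+1), (((k-1).factorial * (m+1-k).factorial : ℕ) : ℝ)⁻¹
      = ∑ j ∈ Finset.range (m+1), ((j.factorial * (m-j).factorial : ℕ) : ℝ)⁻¹ := by
    refine Finset.sum_nbij' (fun k => k - 1) (fun j => j + 1) ?_ ?_ ?_ ?_ ?_ <;>
      intro k hk <;> simp only [Finset.mem_Icc, Finset.mem_range] at hk ⊢
    · omega
    · omega
    · omega
    · rfl
    · have h5 : m + 1 - k = m - (k - 1) := by omega
      rw [h5]
  rw [h1]
  have h2 : ∀ j ∈ Finset.range (m+1), ((j.factorial * (m-j).factorial : ℕ) : ℝ)⁻¹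
      = (m.choose j : ℝ) / (m.factorial : ℝ) := by
    intro j hj
    rw [Finset.mem_range] at hj
    have hc := Nat.choose_mul_factorial_mul_factorial (Nat.lt_succ_iff.mp hj)
    have h3 : ((j.factorial * (m-j).factorial : ℕ) : ℝ) ≠ 0 := by positivity
    have h4 : ((m.factorial : ℕ) : ℝ) ≠ 0 := by positivity
    field_simp
    push_cast [← hc]
    ring
  rw [Finset.sum_congr rfl h2, ← Finset.sum_div, ← Nat.cast_sum, Nat.sum_range_choose]
  simp

lemma jensen_aux {ι : Type*} (s : Finset ι) (hs : s.Nonempty) (c : ι → ℝ)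
    (hc : ∀ i ∈ s, 0 ≤ c i) (α : ℝ) (hα0 : 0 < α) (hα1 : α ≤ 1) :
    ∑ i ∈ s, (c i) ^ α ≤ (s.card : ℝ) * ((∑ i ∈ s, c i) / (s.card : ℝ)) ^ α := by
  have hN : (0:ℝ) < s.card := by exact_mod_cast Finset.card_pos.mpr hs
  have hp : (1:ℝ) ≤ 1/α := (one_le_div hα0).2 hα1
  have key := Real.arith_mean_le_rpow_mean s (fun _ => 1/(s.card:ℝ)) (fun i => (c i) ^ α)
    (fun i _ => by positivity) (by simp [Finset.sum_const]; field_simp)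
    (fun i hi => Real.rpow_nonneg (hc i hi) α) hp
  simp only [one_div_one_div] at key
  have hzp : ∀ i ∈ s, ((c i) ^ α) ^ (1/α : ℝ) = c i := by
    intro i hi
    rw [← Real.rpow_mul (hc i hi), mul_one_div_cancel hα0.ne', Real.rpow_one]
  have key2 : ∑ x ∈ s, 1/(s.card:ℝ) * (c x) ^ α ≤ (∑ x ∈ s, 1/(s.card:ℝ) * c x) ^ α := by
    refine key.trans_eq ?_
    congr 1
    exact Finset.sum_congr rfl (fun i hi => by rw [hzp i hi])
  rw [← Finset.mul_sum, ← Finset.mul_sum] at key2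
  calc ∑ i ∈ s, (c i) ^ α = (s.card : ℝ) * ((1/(s.card:ℝ)) * ∑ i ∈ s, (c i) ^ α) := by
        field_simp
    _ ≤ (s.card : ℝ) * ((1/(s.card:ℝ)) * ∑ i ∈ s, c i) ^ α := by
        apply mul_le_mul_of_nonneg_left key2 hN.le
    _ = (s.card : ℝ) * ((∑ i ∈ s, c i) / (s.card : ℝ)) ^ α := by
        rw [one_div, inv_mul_eq_div]

/-- Upper bound on the quicksort score sequence. -/
theorem quicksort_score_upper_bound (lam : ℝ) (hlam : 0 < lam) (hlam2 : lam ≤ Real.log 2)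
    (q : ℕ → ℝ) (hq0 : q 0 = 1)
    (hq : ∀ n : ℕ, 1 ≤ n → q n =
      Real.exp (-lam * (n + 1)) / n * ∑ k ∈ Finset.Icc 1 n, q (k - 1) * q (n - k)) :
    ∀ n : ℕ, q n ≤ Real.exp (-2 * lam * n) / (Nat.factorial n : ℝ) ^ (lam / Real.log 2) := by
  have hlog2 : (0:ℝ) < Real.log 2 := Real.log_pos one_lt_two
  set α := lam / Real.log 2 with hαdef
  have hα0 : 0 < α := div_pos hlam hlog2
  have hα1 : α ≤ 1 := (div_le_one hlog2).2 hlam2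
  have hqnn : ∀ n, 0 ≤ q n := by
    intro n
    induction n using Nat.strong_induction_on with
    | _ n ih =>
      rcases Nat.eq_zero_or_pos n with h0 | h1
      · rw [h0, hq0]; norm_num
      · rw [hq n h1]
        refine mul_nonneg (div_nonneg (Real.exp_nonneg _) (Nat.cast_nonneg n)) ?_
        refine Finset.sum_nonneg fun k hk => ?_
        rw [Finset.mem_Icc] at hk
        exact mul_nonneg (ih _ (by omega)) (ih _ (by omega))
  intro n
  induction n using Nat.strong_induction_on with
  | _ n ih =>
    rcases Nat.eq_zero_or_pos n with h0 | h1
    · subst h0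
      simp [hq0]
    · have hn : (0:ℝ) < n := by exact_mod_cast h1
      set c : ℕ → ℝ := fun k => (((k-1).factorial * (n-k).factorial : ℕ) : ℝ)⁻¹ with hc
      have step1 : ∑ k ∈ Finset.Icc 1 n, q (k-1) * q (n-k)
          ≤ Real.exp (-2*lam*((n:ℝ)-1)) * ∑ k ∈ Finset.Icc 1 n, (c k) ^ α := by
        rw [Finset.mul_sum]
        refine Finset.sum_le_sum fun k hk => ?_
        rw [Finset.mem_Icc] at hk
        have b1 := ih (k-1) (by omega)
        have b2 := ih (n-k) (by omega)
        have hle : q (k-1) * q (n-k) ≤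
            (Real.exp (-2*lam*((k-1:ℕ):ℝ)) / (((k-1).factorial:ℕ):ℝ)^α) *
            (Real.exp (-2*lam*((n-k:ℕ):ℝ)) / (((n-k).factorial:ℕ):ℝ)^α) :=
          mul_le_mul b1 b2 (hqnn _) (by positivity)
        refine hle.trans_eq ?_
        have h1' : ((k-1:ℕ):ℝ) = (k:ℝ) - 1 := by
          rw [Nat.cast_sub hk.1]; norm_num
        have h2' : ((n-k:ℕ):ℝ) = (n:ℝ) - (k:ℝ) := by
          rw [Nat.cast_sub hk.2]
        have hfa : (0:ℝ) < (((k-1).factorial:ℕ):ℝ) := by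
          exact_mod_cast (k-1).factorial_pos
        have hfb : (0:ℝ) < (((n-k).factorial:ℕ):ℝ) := by
          exact_mod_cast (n-k).factorial_pos
        rw [div_mul_div_comm, ← Real.exp_add, ← Real.mul_rpow hfa.le hfb.le]
        simp only [hc]
        rw [Nat.cast_mul, Real.inv_rpow (by positivity), div_eq_mul_inv]
        congr 2
        rw [h1', h2']; ring
      have hsum : ∑ k ∈ Finset.Icc 1 n, c k = 2^(n-1) / ((n-1).factorial : ℝ) :=
        sum_inv_fact_aux n h1
      have hfn : (0:ℝ) < ((n.factorial:ℕ):ℝ) := by exact_mod_cast n.factorial_pos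
      have hjen : ∑ k ∈ Finset.Icc 1 n, (c k) ^ α
          ≤ (n:ℝ) * ((2:ℝ)^(n-1) / ((n.factorial:ℕ):ℝ))^α := by
        have hcard : (((Finset.Icc 1 n).card : ℕ) : ℝ) = (n:ℝ) := by
          rw [Nat.card_Icc]; push_cast; ring
        have hje := jensen_aux (Finset.Icc 1 n) ⟨1, Finset.mem_Icc.mpr ⟨le_refl 1, h1⟩⟩ c
          (fun i _ => by simp only [hc]; positivity) α hα0 hα1
        rw [hcard, hsum] at hje
        refine hje.trans_eq ?_
        congr 2
        rw [div_div]
        congr 1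
        have : (n.factorial : ℝ) = ((n-1).factorial : ℝ) * n := by
          rw [mul_comm]
          exact_mod_cast (Nat.mul_factorial_pred h1.ne').symm
        rw [this]
      rw [hq n h1]
      have hpos : (0:ℝ) ≤ Real.exp (-lam*((n:ℝ)+1)) / n := by positivity
      calc Real.exp (-lam*((n:ℝ)+1)) / n * ∑ k ∈ Finset.Icc 1 n, q (k-1) * q (n-k)
          ≤ Real.exp (-lam*((n:ℝ)+1)) / n *
            (Real.exp (-2*lam*((n:ℝ)-1)) * ((n:ℝ) * ((2:ℝ)^(n-1) / ((n.factorial:ℕ):ℝ))^α)) := by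
            refine mul_le_mul_of_nonneg_left ?_ hpos
            exact step1.trans (mul_le_mul_of_nonneg_left hjen (Real.exp_nonneg _))
        _ = Real.exp (-2 * lam * n) / ((n.factorial:ℕ):ℝ)^α := by
            have h2n : ((2:ℝ)^(n-1) / ((n.factorial:ℕ):ℝ))^α
                = Real.exp (lam*((n:ℝ)-1)) / ((n.factorial:ℕ):ℝ)^α := by
              rw [Real.div_rpow (by positivity) hfn.le]
              congr 1
              rw [← Real.rpow_natCast (2:ℝ) (n-1), ← Real.rpow_mul (by norm_num),
                Real.rpow_def_of_pos (by norm_num : (0:ℝ) < 2)]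
              congr 1
              have hcast : ((n-1:ℕ):ℝ) = (n:ℝ) - 1 := by
                rw [Nat.cast_sub h1]; norm_num
              rw [hcast, hαdef]
              field_simp
            rw [h2n]
            have e1 : Real.exp (-lam*((n:ℝ)+1)) * Real.exp (-2*lam*((n:ℝ)-1)) *
                Real.exp (lam*((n:ℝ)-1)) = Real.exp (-2*lam*n) := by
              rw [← Real.exp_add, ← Real.exp_add]
              congr 1
              ring
            rw [← e1]
            field_simp
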